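/- Define (ξ_k)_i = (1/(k+1))·∂u_k/∂x_i for k ≥ 0 and 1 ≤ i ≤ n. Then for every k ≥ 0 and every i, the following identity of polynomials holds: x_i·(ξ_k)_i = ∑_{j=0}^{k} u_j·(ξ_{k−j})_i + (n−k−1)·(ξ_{k+1})_i. -/

import Mathlib

noncomputable section

open MvPolynomial

/-- The power series `Ē(z) = ∑_{l=0}^n (−1)^l·((n−l)!/n!)·e_l·z^l` over
`ℚ[x₁,…,xₙ]`. -/
def Ebar (n : ℕ) : PowerSeries (MvPolynomial (Fin n) ℚ) :=
  ∑ l ∈ Finset.range (n + 1),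
    PowerSeries.monomial l
      (C ((-1 : ℚ) ^ l * ((n - l).factorial : ℚ) / (n.factorial : ℚ)) *
        esymm (Fin n) ℚ l)

/-- The symmetric polynomials `u_k` defined by `−log Ē(z) = ∑_{k≥0} u_k·z^{k+1}/(k+1)`,
i.e. `u_k` is `(k+1)` times the coefficient of `z^{k+1}` in
`−log Ē(z) = ∑_{m≥1} (1 − Ē(z))^m/m` (only the terms with `1 ≤ m ≤ k+1` contribute,
and the `m = 0` summand below vanishes since `(0 : ℚ)⁻¹ = 0`). -/
def uPoly (n k : ℕ) : MvPolynomial (Fin n) ℚ :=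
  ((k : ℚ) + 1) • ∑ m ∈ Finset.range (k + 2),
    ((m : ℚ))⁻¹ • PowerSeries.coeff (k + 1) ((1 - Ebar n) ^ m)

/-- `(ξ_k)_i = (1/(k+1))·∂u_k/∂x_i`. -/
def xiPoly (n k : ℕ) (i : Fin n) : MvPolynomial (Fin n) ℚ :=
  ((k : ℚ) + 1)⁻¹ • pderiv i (uPoly n k)

section Aux
open Finset PowerSeries

variable {n : ℕ}

local notation "Rp" => MvPolynomial (Fin n) ℚ

/-! ### elementary symmetric polynomial facts -/

/-- elementary symmetric polynomial over a sub-finset of variables -/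
def Epart (n : ℕ) (S : Finset (Fin n)) (l : ℕ) : MvPolynomial (Fin n) ℚ :=
  ∑ T ∈ S.powersetCard l, ∏ j ∈ T, MvPolynomial.X j

lemma pderiv_prod_X_of_not_mem (i : Fin n) (T : Finset (Fin n)) (h : i ∉ T) :
    pderiv i (∏ j ∈ T, (MvPolynomial.X j : Rp)) = 0 := by
  induction T using Finset.cons_induction with
  | empty => simp
  | cons a T ha ih =>
    rw [Finset.prod_cons, pderiv_mul, ih (fun hi => h (Finset.mem_cons_of_mem hi)),
      pderiv_X_of_ne (fun hai => h (by simp [hai]))]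
    simp

lemma pderiv_Epart (i : Fin n) (S : Finset (Fin n)) (hi : i ∉ S) (l : ℕ) :
    pderiv i (Epart n S l) = 0 := by
  rw [Epart, map_sum]
  refine Finset.sum_eq_zero fun T hT => ?_
  exact pderiv_prod_X_of_not_mem i T
    (fun h => hi ((Finset.mem_powersetCard.mp hT).1 h))

lemma esymm_split (i : Fin n) (l : ℕ) :
    esymm (Fin n) ℚ (l + 1) = Epart n (univ.erase i) (l + 1)
      + MvPolynomial.X i * Epart n (univ.erase i) l := by
  have h1 : powersetCard (l+1) (univ : Finset (Fin n))
      = powersetCard (l+1) (univ.erase i) ∪ ((univ.erase i).powersetCard l).image (insert i) := by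
    conv_lhs => rw [← Finset.insert_erase (mem_univ i)]
    exact Finset.powersetCard_succ_insert (Finset.notMem_erase i _) l
  have hdisj : Disjoint (powersetCard (l+1) ((univ : Finset (Fin n)).erase i))
      (((univ.erase i).powersetCard l).image (insert i)) := by
    rw [Finset.disjoint_right]
    rintro T hT hT2
    obtain ⟨T', hT', rfl⟩ := Finset.mem_image.mp hT
    exact (Finset.notMem_erase i _)
      ((Finset.mem_powersetCard.mp hT2).1 (Finset.mem_insert_self i T'))
  rw [esymm, h1, Finset.sum_union hdisj, Epart, Epart, Finset.mul_sum]
  congr 1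
  rw [Finset.sum_image]
  · refine Finset.sum_congr rfl fun T hT => ?_
    have hiT : i ∉ T := fun h =>
      Finset.notMem_erase i _ ((Finset.mem_powersetCard.mp hT).1 h)
    rw [Finset.prod_insert hiT]
  · intro T hT T' hT' h
    have hiT : i ∉ T := fun h =>
      Finset.notMem_erase i _ ((Finset.mem_powersetCard.mp hT).1 h)
    have hiT' : i ∉ T' := fun h' =>
      Finset.notMem_erase i _ ((Finset.mem_powersetCard.mp hT').1 h')
    have := congrArg (fun S => Finset.erase S i) h
    simpa [Finset.erase_insert hiT, Finset.erase_insert hiT'] using this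

lemma pderiv_esymm_succ (i : Fin n) (l : ℕ) :
    pderiv i (esymm (Fin n) ℚ (l + 1)) = Epart n (univ.erase i) l := by
  rw [esymm_split i l, map_add, pderiv_Epart i _ (Finset.notMem_erase i _), pderiv_mul,
    pderiv_Epart i _ (Finset.notMem_erase i _), pderiv_X_self]
  ring

/-- Key polynomial identity: `∂ᵢ e_{l+1} + xᵢ ∂ᵢ e_l = e_l`. -/
lemma key1 (i : Fin n) (l : ℕ) :
    pderiv i (esymm (Fin n) ℚ (l + 1)) + MvPolynomial.X i * pderiv i (esymm (Fin n) ℚ l)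
      = esymm (Fin n) ℚ l := by
  cases l with
  | zero => simp [pderiv_esymm_succ, Epart]
  | succ l => rw [pderiv_esymm_succ, pderiv_esymm_succ, esymm_split i l]

lemma esymm_top : esymm (Fin n) ℚ (n + 1) = 0 := by
  rw [esymm, Finset.powersetCard_eq_empty.mpr (by simp), Finset.sum_empty]

/-! ### coefficientwise partial derivative on power series -/

/-- coefficientwise partial derivative on power series -/
def Dp (i : Fin n) (f : PowerSeries Rp) : PowerSeries Rp :=
  PowerSeries.mk fun N => pderiv i (PowerSeries.coeff N f)

@[simp] lemma coeff_Dp (i : Fin n) (f : PowerSeries Rp) (N : ℕ) :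
    PowerSeries.coeff N (Dp i f) = pderiv i (PowerSeries.coeff N f) :=
  PowerSeries.coeff_mk _ _

lemma Dp_one (i : Fin n) : Dp i (1 : PowerSeries Rp) = 0 := by
  refine PowerSeries.ext fun N => ?_
  rw [coeff_Dp, PowerSeries.coeff_one]
  split <;> simp

lemma Dp_mul (i : Fin n) (f g : PowerSeries Rp) :
    Dp i (f * g) = Dp i f * g + f * Dp i g := by
  refine PowerSeries.ext fun N => ?_
  rw [map_add, PowerSeries.coeff_mul, PowerSeries.coeff_mul, coeff_Dp,
    PowerSeries.coeff_mul, map_sum, ← Finset.sum_add_distrib]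
  refine Finset.sum_congr rfl fun p _ => ?_
  rw [pderiv_mul, coeff_Dp, coeff_Dp]

lemma Dp_pow (i : Fin n) (f : PowerSeries Rp) (m : ℕ) :
    Dp i (f ^ m) = m • (f ^ (m - 1) * Dp i f) := by
  induction m with
  | zero => simpa using Dp_one i
  | succ m ih =>
    rw [pow_succ, Dp_mul, ih]
    cases m with
    | zero => simp
    | succ m =>
      simp only [Nat.succ_sub_one, nsmul_eq_mul, Nat.cast_add, Nat.cast_one]
      ring

lemma Dp_sub (i : Fin n) (f g : PowerSeries Rp) :
    Dp i (f - g) = Dp i f - Dp i g := by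
  refine PowerSeries.ext fun N => ?_
  simp

lemma Dp_smul (i : Fin n) (q : ℚ) (f : PowerSeries Rp) :
    Dp i (q • f) = q • Dp i f := by
  refine PowerSeries.ext fun N => ?_
  simp [PowerSeries.coeff_smul]

lemma Dp_sum (i : Fin n) (s : Finset ℕ) (f : ℕ → PowerSeries Rp) :
    Dp i (∑ m ∈ s, f m) = ∑ m ∈ s, Dp i (f m) := by
  refine PowerSeries.ext fun N => ?_
  simp [map_sum]

lemma Dp_one_sub (i : Fin n) (f : PowerSeries Rp) :
    Dp i (1 - f) = - Dp i f := by
  rw [Dp_sub, Dp_one, zero_sub]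

/-! ### coefficients of Ebar -/

/-- the scalar coefficients of Ebar -/
def cE (n l : ℕ) : ℚ := (-1 : ℚ) ^ l * ((n - l).factorial : ℚ) / (n.factorial : ℚ)

lemma coeff_Ebar (l : ℕ) :
    PowerSeries.coeff l (Ebar n)
      = if l ≤ n then MvPolynomial.C (cE n l) * esymm (Fin n) ℚ l else 0 := by
  rw [Ebar, map_sum]
  simp_rw [PowerSeries.coeff_monomial]
  rw [Finset.sum_ite_eq (Finset.range (n+1)) l]
  simp [cE, Nat.lt_succ_iff]

lemma constantCoeff_Ebar : PowerSeries.coeff 0 (Ebar n) = 1 := by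
  rw [coeff_Ebar]
  simp [cE, Nat.factorial_ne_zero, div_self]

lemma Ebar_ne_zero : (Ebar n) ≠ 0 := by
  intro h
  have h0 := constantCoeff_Ebar (n := n)
  rw [h, map_zero] at h0
  exact one_ne_zero (α := Rp) h0.symm

lemma coeff_B_pow_eq_zero {N m : ℕ} (h : N < m) :
    PowerSeries.coeff N ((1 - Ebar n) ^ m) = 0 := by
  have hX : (PowerSeries.X : PowerSeries Rp) ∣ (1 - Ebar n) := by
    rw [PowerSeries.X_dvd_iff]
    simp [map_sub, ← PowerSeries.coeff_zero_eq_constantCoeff_apply, constantCoeff_Ebar]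
  exact PowerSeries.X_pow_dvd_iff.mp (pow_dvd_pow_of_dvd hX m) N h

lemma coeff_B_pow_mul_eq_zero {N m : ℕ} (h : N < m) (f : PowerSeries Rp) :
    PowerSeries.coeff N ((1 - Ebar n) ^ m * f) = 0 := by
  rw [PowerSeries.coeff_mul]
  refine Finset.sum_eq_zero fun p hp => ?_
  rw [coeff_B_pow_eq_zero (lt_of_le_of_lt (Finset.HasAntidiagonal.antidiagonal.fst_le hp) h), zero_mul]

/-! ### the logarithm series -/

/-- the power series `L = −log Ē` -/
def Lser (n : ℕ) : PowerSeries (MvPolynomial (Fin n) ℚ) :=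
  PowerSeries.mk fun N => ∑ m ∈ Finset.range (N + 1),
    ((m : ℚ))⁻¹ • PowerSeries.coeff N ((1 - Ebar n) ^ m)

/-- truncated logarithm -/
def Ltr (n M : ℕ) : PowerSeries (MvPolynomial (Fin n) ℚ) :=
  ∑ m ∈ Finset.range (M + 1), ((m : ℚ))⁻¹ • (1 - Ebar n) ^ m

lemma coeff_Lser {N M : ℕ} (h : N ≤ M) :
    PowerSeries.coeff N (Lser n) = PowerSeries.coeff N (Ltr n M) := by
  rw [Lser, PowerSeries.coeff_mk, Ltr, map_sum]
  simp_rw [PowerSeries.coeff_smul]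
  refine Finset.sum_subset (Finset.range_subset_range.mpr (by omega)) fun m _ hm => ?_
  rw [coeff_B_pow_eq_zero (by simpa using hm), smul_zero]

lemma inv_smul_sum (M : ℕ) (g : ℕ → PowerSeries Rp) :
    ∑ m ∈ Finset.range (M + 1), ((m : ℚ))⁻¹ • (m • g m)
      = ∑ m ∈ Finset.range M, g (m + 1) := by
  rw [Finset.sum_range_succ']
  simp only [Nat.cast_zero, inv_zero, zero_smul, smul_zero, add_zero]
  refine Finset.sum_congr rfl fun m _ => ?_
  rw [← Nat.cast_smul_eq_nsmul ℚ, smul_smul, inv_mul_cancel₀ (by positivity), one_smul]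

lemma coeff_mul_congr {N : ℕ} (A f g : PowerSeries Rp)
    (h : ∀ j ≤ N, PowerSeries.coeff j f = PowerSeries.coeff j g) :
    PowerSeries.coeff N (A * f) = PowerSeries.coeff N (A * g) := by
  rw [PowerSeries.coeff_mul, PowerSeries.coeff_mul]
  refine Finset.sum_congr rfl fun p hp => ?_
  rw [h p.2 (Finset.HasAntidiagonal.antidiagonal.snd_le hp)]

lemma derivative_qsmul (q : ℚ) (f : PowerSeries Rp) :
    d⁄dX Rp (q • f) = q • d⁄dX Rp f := by
  rw [← algebraMap_smul Rp q f, Derivation.map_smul, algebraMap_smul]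

/-- geometric series computation, for Dp -/
lemma Dp_Ltr (i : Fin n) (M : ℕ) :
    Ebar n * Dp i (Ltr n M)
      = Dp i (1 - Ebar n) - (1 - Ebar n) ^ M * Dp i (1 - Ebar n) := by
  rw [Ltr, Dp_sum]
  simp_rw [Dp_smul, Dp_pow]
  rw [inv_smul_sum M (fun m => (1 - Ebar n) ^ (m - 1) * Dp i (1 - Ebar n))]
  simp only [Nat.add_sub_cancel]
  rw [← Finset.sum_mul]
  have g := geom_sum_mul (1 - Ebar n) M
  linear_combination (- Dp i (1 - Ebar n)) * g

/-- geometric series computation, for d⁄dX -/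
lemma derivative_Ltr (M : ℕ) :
    Ebar n * d⁄dX Rp (Ltr n M)
      = d⁄dX Rp (1 - Ebar n) - (1 - Ebar n) ^ M * d⁄dX Rp (1 - Ebar n) := by
  rw [Ltr, map_sum]
  simp_rw [derivative_qsmul, Derivation.leibniz_pow, smul_eq_mul]
  rw [inv_smul_sum M (fun m => (1 - Ebar n) ^ (m - 1) * d⁄dX Rp (1 - Ebar n))]
  simp only [Nat.add_sub_cancel]
  rw [← Finset.sum_mul]
  have g := geom_sum_mul (1 - Ebar n) M
  linear_combination (- d⁄dX Rp (1 - Ebar n)) * g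

/-- `Ē · ∂ᵢ(−log Ē) = −∂ᵢĒ`. -/
lemma h1 (i : Fin n) : Ebar n * Dp i (Lser n) = - Dp i (Ebar n) := by
  refine PowerSeries.ext fun N => ?_
  have step1 : PowerSeries.coeff N (Ebar n * Dp i (Lser n))
      = PowerSeries.coeff N (Ebar n * Dp i (Ltr n (N + 1))) := by
    refine coeff_mul_congr _ _ _ fun j hj => ?_
    rw [coeff_Dp, coeff_Dp, coeff_Lser (show j ≤ N + 1 by omega)]
  rw [step1, Dp_Ltr, map_sub, coeff_B_pow_mul_eq_zero (by omega), sub_zero,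
    Dp_one_sub, map_neg]

/-- `Ē · d/dz(−log Ē) = −Ē′`. -/
lemma h2 : Ebar n * d⁄dX Rp (Lser n) = - d⁄dX Rp (Ebar n) := by
  refine PowerSeries.ext fun N => ?_
  have step1 : PowerSeries.coeff N (Ebar n * d⁄dX Rp (Lser n))
      = PowerSeries.coeff N (Ebar n * d⁄dX Rp (Ltr n (N + 1))) := by
    refine coeff_mul_congr _ _ _ fun j hj => ?_
    rw [PowerSeries.coeff_derivative, PowerSeries.coeff_derivative,
      coeff_Lser (show j + 1 ≤ N + 1 by omega)]
  rw [step1, derivative_Ltr, map_sub, coeff_B_pow_mul_eq_zero (by omega), sub_zero,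
    derivative_one_sub, map_neg]
where
  derivative_one_sub (f : PowerSeries Rp) : d⁄dX Rp (1 - f) = - d⁄dX Rp f := by
    rw [map_sub, Derivation.map_one_eq_zero, zero_sub]

/-! ### misc scalar conversion lemmas -/

lemma mul_natCast_succ_smul (p : Rp) (l : ℕ) :
    p * ((l : Rp) + 1) = ((l : ℚ) + 1) • p := by
  rw [MvPolynomial.smul_eq_C_mul, map_add, map_one, MvPolynomial.C_eq_coe_nat]
  ring

lemma qsmul_series (q : ℚ) (f : PowerSeries Rp) :
    q • f = PowerSeries.C (MvPolynomial.C q) * f := by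
  refine PowerSeries.ext fun N => ?_
  rw [PowerSeries.coeff_smul, PowerSeries.coeff_C_mul, MvPolynomial.smul_eq_C_mul]

lemma cE_succ {l : ℕ} (h : l + 1 ≤ n) :
    cE n l = -((n : ℚ) - l) * cE n (l + 1) := by
  have h1 : n - l = (n - (l + 1)) + 1 := by omega
  have h2 : ((n - (l + 1) : ℕ) : ℚ) + 1 = (n : ℚ) - l := by
    rw [Nat.cast_sub h]
    push_cast
    ring
  rw [cE, cE, h1, Nat.factorial_succ, pow_succ]
  push_cast
  rw [h2]
  field_simp

/-! ### the structural ODE satisfied by Ebar -/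

lemma coeff_zero_X_mul (f : PowerSeries Rp) :
    PowerSeries.coeff 0 (PowerSeries.X * f) = 0 := by
  rw [PowerSeries.coeff_zero_eq_constantCoeff, map_mul, PowerSeries.constantCoeff_X, zero_mul]

lemma h4 (i : Fin n) :
    PowerSeries.X * d⁄dX Rp (Dp i (Ebar n))
      + PowerSeries.C (MvPolynomial.X i) * (PowerSeries.X * Dp i (Ebar n))
      = PowerSeries.C (MvPolynomial.C ((n : ℚ) + 1)) * Dp i (Ebar n)
        + PowerSeries.X * Ebar n := by
  refine PowerSeries.ext fun N => ?_
  rw [map_add, map_add, PowerSeries.coeff_C_mul, PowerSeries.coeff_C_mul, coeff_Dp]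
  cases N with
  | zero =>
    rw [coeff_zero_X_mul, coeff_zero_X_mul, constantCoeff_Ebar]
    simp [coeff_zero_X_mul]
  | succ l =>
    rw [PowerSeries.coeff_succ_X_mul, PowerSeries.coeff_succ_X_mul,
      PowerSeries.coeff_succ_X_mul, PowerSeries.coeff_derivative, coeff_Dp, coeff_Dp]
    by_cases h1n : l + 1 ≤ n
    · have hl : l ≤ n := by omega
      simp only [coeff_Ebar, if_pos h1n, if_pos hl, pderiv_C_mul]
      conv_rhs => rw [← key1 i l]
      rw [mul_natCast_succ_smul]
      simp only [← MvPolynomial.smul_eq_C_mul]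
      simp only [mul_smul_comm]
      rw [cE_succ h1n]
      module
    · by_cases hl : l ≤ n
      · have hln : l = n := by omega
        subst hln
        have he : esymm (Fin l) ℚ l = MvPolynomial.X i * pderiv i (esymm (Fin l) ℚ l) := by
          have hk := key1 i l
          rw [esymm_top, map_zero, zero_add] at hk
          exact hk.symm
        simp only [coeff_Ebar, if_neg h1n, if_pos le_rfl, pderiv_C_mul, map_zero, zero_mul,
          mul_zero, zero_add, add_zero, smul_zero]
        conv_rhs => rw [he]
        ring
      · simp only [coeff_Ebar, if_neg h1n, if_neg hl]
        simp

/-! ### the main power series identity -/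

lemma E2 (i : Fin n) :
    PowerSeries.X * (PowerSeries.C (MvPolynomial.X i) * Dp i (Lser n)
        + d⁄dX Rp (Dp i (Lser n)) + 1)
      = PowerSeries.X * d⁄dX Rp (Lser n) * Dp i (Lser n)
        + PowerSeries.C (MvPolynomial.C ((n : ℚ) + 1)) * Dp i (Lser n) := by
  have hA : (Ebar n) ≠ 0 := Ebar_ne_zero
  have h3 := congrArg (d⁄dX Rp) (h1 i)
  rw [Derivation.leibniz, smul_eq_mul, smul_eq_mul, map_neg] at h3
  apply mul_left_cancel₀ (pow_ne_zero 2 hA)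
  linear_combination
    (PowerSeries.C (MvPolynomial.X i) * PowerSeries.X * Ebar n
      - PowerSeries.C (MvPolynomial.C ((n : ℚ) + 1)) * Ebar n) * (h1 i)
    - PowerSeries.X * Dp i (Lser n) * Ebar n * h2
    + PowerSeries.X * Ebar n * h3
    - Ebar n * (h4 i)

end Aux

open Finset PowerSeries in
theorem xi_recursion (n : ℕ) (hn : 1 ≤ n) (k : ℕ) (i : Fin n) :
    X i * xiPoly n k i
      = (∑ j ∈ Finset.range (k + 1), uPoly n j * xiPoly n (k - j) i)
        + ((n : ℚ) - (k : ℚ) - 1) • xiPoly n (k + 1) i := by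
  have hxi : ∀ m : ℕ, xiPoly n m i
      = PowerSeries.coeff (m + 1) (Dp i (Lser n)) := by
    intro m
    have hkne : ((m : ℚ) + 1) ≠ 0 := by positivity
    have hu0 : uPoly n m = ((m : ℚ) + 1) • PowerSeries.coeff (m + 1) (Lser n) := by
      rw [uPoly, Lser, PowerSeries.coeff_mk]
    rw [xiPoly, hu0, Derivation.map_smul, smul_smul, inv_mul_cancel₀ hkne, one_smul, ← coeff_Dp]
  have hu : ∀ j : ℕ, uPoly n j
      = PowerSeries.coeff j (d⁄dX (MvPolynomial (Fin n) ℚ) (Lser n)) := by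
    intro j
    rw [PowerSeries.coeff_derivative, mul_natCast_succ_smul, uPoly, Lser, PowerSeries.coeff_mk]
  have hXi0 : PowerSeries.coeff 0 (Dp i (Lser n)) = 0 := by
    rw [coeff_Dp, Lser, PowerSeries.coeff_mk]
    simp
  have hco := congrArg (PowerSeries.coeff (k + 2)) (E2 i)
  rw [mul_assoc (PowerSeries.X), PowerSeries.coeff_succ_X_mul, map_add, map_add, map_add,
    PowerSeries.coeff_succ_X_mul, PowerSeries.coeff_C_mul, PowerSeries.coeff_derivative,
    PowerSeries.coeff_one, if_neg (Nat.succ_ne_zero k), PowerSeries.coeff_C_mul,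
    PowerSeries.coeff_mul, Finset.Nat.sum_antidiagonal_eq_sum_range_succ_mk,
    Finset.sum_range_succ, Nat.sub_self, hXi0, mul_zero, add_zero] at hco
  have hsum : ∑ j ∈ Finset.range (k + 1), uPoly n j * xiPoly n (k - j) i
      = ∑ j ∈ Finset.range (k + 1),
          PowerSeries.coeff j (d⁄dX (MvPolynomial (Fin n) ℚ) (Lser n))
            * PowerSeries.coeff (k + 1 - j) (Dp i (Lser n)) := by
    refine Finset.sum_congr rfl fun j hj => ?_
    have hjk : (k - j) + 1 = k + 1 - j := by
      have := Finset.mem_range.mp hj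
      omega
    rw [hu j, hxi (k - j), hjk]
  have hC : (MvPolynomial.C ((n : ℚ) + 1) : MvPolynomial (Fin n) ℚ)
      = MvPolynomial.C ((n : ℚ) - (k : ℚ) - 1) + ((((k + 1 : ℕ) : MvPolynomial (Fin n) ℚ)) + 1) := by
    rw [← MvPolynomial.C_eq_coe_nat, ← map_one (MvPolynomial.C (σ := Fin n) (R := ℚ)),
      ← map_add, ← map_add]
    congr 1
    push_cast
    ring
  rw [hxi k, hxi (k + 1), hsum, MvPolynomial.smul_eq_C_mul]
  linear_combination hco
    + PowerSeries.coeff (k + 2) (Dp i (Lser n)) * hC
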